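/- (Theorem 2, part 3.) For any complex r×m matrix Φ with linearly independent columns there exist prior probabilities η_1,…,η_m (η_i ≥ 0, Σ_i η_i = 1) for which the equal-probability measurement is optimal; i.e. there exists η with η_i ≥ 0 and Σ_i η_i = 1 such that Σ_i η_i p_i ≤ λ_min for every p ∈ ℝ^m with p_i ≥ 0 and I_r − Σ_i p_i Q_i positive semidefinite. -/

import Mathlib

open Matrix BigOperators ComplexOrder

noncomputable section

/-- The reciprocal states: columns of `Φ (ΦᴴΦ)⁻¹`. -/
def reciprocal {r m : ℕ} (Φ : Matrix (Fin r) (Fin m) ℂ) : Matrix (Fin r) (Fin m) ℂ :=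
  Φ * (Φᴴ * Φ)⁻¹

/-- The rank-one operator `Q_i = φ̃_i φ̃_iᴴ`. -/
def Qop {r m : ℕ} (Φ : Matrix (Fin r) (Fin m) ℂ) (i : Fin m) : Matrix (Fin r) (Fin r) ℂ :=
  vecMulVec (fun a => reciprocal Φ a i) (fun b => star (reciprocal Φ b i))

/-- `p` is primal feasible: `p_i ≥ 0` and `I - Σ p_i Q_i ⪰ 0`. -/
def PrimalFeasible {r m : ℕ} (Φ : Matrix (Fin r) (Fin m) ℂ) (p : Fin m → ℝ) : Prop :=
  (∀ i, 0 ≤ p i) ∧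
    ((1 : Matrix (Fin r) (Fin r) ℂ) - ∑ i : Fin m, (p i : ℂ) • Qop Φ i).PosSemidef

/-- `(X, z)` is dual feasible: `X ⪰ 0`, `z_i ≥ 0` and `Re Tr(Q_i X) = η_i + z_i`. -/
def DualFeasible {r m : ℕ} (Φ : Matrix (Fin r) (Fin m) ℂ) (η : Fin m → ℝ)
    (X : Matrix (Fin r) (Fin r) ℂ) (z : Fin m → ℝ) : Prop :=
  X.PosSemidef ∧ (∀ i, 0 ≤ z i) ∧ ∀ i, (Matrix.trace (Qop Φ i * X)).re = η i + z i

theorem stmt_11 (m r : ℕ) (hm : 0 < m) (hmr : m ≤ r)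
    (Φ : Matrix (Fin r) (Fin m) ℂ)
    (hind : LinearIndependent ℂ (fun i : Fin m => fun j : Fin r => Φ j i))
    (lam : ℝ)
    -- `lam` is the smallest eigenvalue of the Gram matrix `ΦᴴΦ`:
    (hev : ∃ u : Fin m → ℂ, u ≠ 0 ∧ (Φᴴ * Φ).mulVec u = (lam : ℂ) • u)
    (hmin : ((Φᴴ * Φ) - (lam : ℂ) • 1).PosSemidef) :
    ∃ η : Fin m → ℝ, (∀ i, 0 ≤ η i) ∧ (∑ i : Fin m, η i = 1) ∧
      ∀ p : Fin m → ℝ, PrimalFeasible Φ p → ∑ i : Fin m, η i * p i ≤ lam := by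
  classical
  obtain ⟨u, hu0, huev⟩ := hev
  have hmv : ∀ x : Fin m → ℂ, x ≠ 0 → Φ.mulVec x ≠ 0 := by
    intro x hx hΦx
    apply hx
    have hz : ∑ i : Fin m, x i • (fun j : Fin r => Φ j i) = 0 := by
      funext j
      have := congrFun hΦx j
      simpa [Matrix.mulVec, dotProduct, mul_comm, Finset.sum_apply] using this
    have := Fintype.linearIndependent_iff.mp hind x hz
    funext i; exact this i
  have hGpd : (Φᴴ * Φ).PosDef := by
    refine Matrix.PosDef.of_dotProduct_mulVec_pos (Matrix.isHermitian_conjTranspose_mul_self _) fun x hx => ?_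
    have h1 : star x ⬝ᵥ (Φᴴ * Φ).mulVec x = star (Φ.mulVec x) ⬝ᵥ (Φ.mulVec x) := by
      rw [← Matrix.mulVec_mulVec, Matrix.dotProduct_mulVec, Matrix.vecMul_conjTranspose,
        star_star]
    rw [h1]
    exact dotProduct_star_self_pos_iff.mpr (hmv x hx)
  have hdet : IsUnit (Φᴴ * Φ).det := (Matrix.isUnit_iff_isUnit_det _).mp hGpd.isUnit
  have hrec : (reciprocal Φ)ᴴ * Φ = 1 := by
    rw [reciprocal, Matrix.conjTranspose_mul, Matrix.conjTranspose_nonsing_inv,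
      (Matrix.isHermitian_conjTranspose_mul_self Φ).eq, Matrix.mul_assoc,
      Matrix.nonsing_inv_mul _ hdet]
  set v : Fin r → ℂ := Φ.mulVec u with hv
  have hui : ∀ i, (fun b => star (reciprocal Φ b i)) ⬝ᵥ v = u i := by
    intro i
    have h2 : (reciprocal Φ)ᴴ.mulVec v = u := by
      rw [hv, Matrix.mulVec_mulVec, hrec, Matrix.one_mulVec]
    have := congrFun h2 i
    simpa [Matrix.mulVec, Matrix.conjTranspose_apply, dotProduct] using this
  set s : ℝ := ∑ i : Fin m, Complex.normSq (u i) with hs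
  have hspos : 0 < s := by
    obtain ⟨i, hi⟩ := Function.ne_iff.mp hu0
    exact Finset.sum_pos' (fun j _ => Complex.normSq_nonneg _)
      ⟨i, Finset.mem_univ i, Complex.normSq_pos.mpr hi⟩
  refine ⟨fun i => Complex.normSq (u i) / s, fun i => div_nonneg (Complex.normSq_nonneg _) hspos.le, ?_, ?_⟩
  · rw [← Finset.sum_div, ← hs, div_self hspos.ne']
  intro p hp
  have hsu : star u ⬝ᵥ u = (s : ℂ) := by
    simp [dotProduct, hs, Complex.normSq_eq_conj_mul_self, Pi.star_apply]
  have hvv : star v ⬝ᵥ v = (lam : ℂ) * s := by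
    have h1 : star u ⬝ᵥ (Φᴴ * Φ).mulVec u = star v ⬝ᵥ v := by
      rw [← Matrix.mulVec_mulVec, Matrix.dotProduct_mulVec, Matrix.vecMul_conjTranspose,
        star_star, hv]
    rw [← h1, huev, dotProduct_smul, hsu, smul_eq_mul]
  have hQ : ∀ i, star v ⬝ᵥ (Qop Φ i).mulVec v = (Complex.normSq (u i) : ℂ) := by
    intro i
    have hmvQ : (Qop Φ i).mulVec v = fun b => reciprocal Φ b i * u i := by
      funext b
      simp only [Qop, Matrix.mulVec, Matrix.vecMulVec_apply, dotProduct]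
      rw [← hui i]
      simp [dotProduct, Finset.mul_sum, mul_assoc]
    rw [hmvQ]
    have h3 : star v ⬝ᵥ (fun b => reciprocal Φ b i * u i)
        = (star v ⬝ᵥ fun b => reciprocal Φ b i) * u i := by
      simp [dotProduct, Finset.sum_mul, mul_assoc]
    rw [h3]
    have hconj : (star v ⬝ᵥ fun b => reciprocal Φ b i) = star (u i) := by
      have h4 := congrArg star (hui i)
      rw [← h4, star_dotProduct]
      simp [dotProduct, mul_comm]
    rw [hconj, Complex.normSq_eq_conj_mul_self]
    simp [Complex.star_def]
  have hpos := hp.2.dotProduct_mulVec_nonneg v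
  have hexpand : star v ⬝ᵥ ((1 : Matrix (Fin r) (Fin r) ℂ)
      - ∑ i : Fin m, (p i : ℂ) • Qop Φ i).mulVec v
      = (lam : ℂ) * s - ∑ i : Fin m, (p i : ℂ) * Complex.normSq (u i) := by
    rw [Matrix.sub_mulVec, dotProduct_sub, Matrix.one_mulVec, hvv]
    congr 1
    have h5 : ∀ t : Finset (Fin m), star v ⬝ᵥ (∑ i ∈ t, (p i : ℂ) • Qop Φ i).mulVec v
        = ∑ i ∈ t, (p i : ℂ) * (star v ⬝ᵥ (Qop Φ i).mulVec v) := by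
      intro t
      induction t using Finset.induction with
      | empty => simp
      | insert _ _ h ih =>
        rw [Finset.sum_insert h, Finset.sum_insert h, Matrix.add_mulVec,
          dotProduct_add, ih, Matrix.smul_mulVec, dotProduct_smul,
          smul_eq_mul]
    rw [h5]
    exact Finset.sum_congr rfl fun i _ => by rw [hQ i]
  rw [hexpand] at hpos
  have hre : ∑ i : Fin m, p i * Complex.normSq (u i) ≤ lam * s := by
    have h6 := (Complex.le_def.mp hpos).1
    simp only [Complex.zero_re, Complex.sub_re, Complex.mul_re, Complex.ofReal_re,
      Complex.ofReal_im, Complex.re_sum, mul_zero, sub_zero, zero_mul] at h6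
    linarith [h6]
  have hfinal : ∑ i : Fin m, Complex.normSq (u i) / s * p i
      = (∑ i : Fin m, p i * Complex.normSq (u i)) / s := by
    rw [Finset.sum_div]
    exact Finset.sum_congr rfl fun i _ => by ring
  rw [hfinal]
  rw [div_le_iff₀ hspos]
  linarith [hre]
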